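/- The minimizer of the dual dissipation function over an iso-force class is a steady (divergence-free) force: let Ψ* be a dissipation function on ℝ^E with conjugate Ψ, let S ∈ ℝ^{V×E}, and let V be a matrix whose columns form a basis of Ker S, so that Ker Vᵀ = Im Sᵀ. For any f₀ ∈ ℝ^E, the minimum of Ψ* over the affine set {f ∈ ℝ^E : Vᵀf = Vᵀf₀} = {f : f − f₀ ∈ Im Sᵀ} is attained at a unique point f◊, and f◊ satisfies S ∇Ψ*(f◊) = 0, i.e., the flux ∇Ψ*(f◊) lies in Ker S. -/

import Mathlib

open Matrix Filter Set

noncomputable def grad {n : ℕ} (F : (Fin n → ℝ) → ℝ) (x : Fin n → ℝ) : Fin n → ℝ :=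
  fun i => fderiv ℝ F x (Pi.single i 1)

def IsDissipation {n : ℕ} (Ψ : (Fin n → ℝ) → ℝ) : Prop :=
  StrictConvexOn ℝ Set.univ Ψ ∧ ContDiff ℝ 1 Ψ ∧
  Tendsto (fun f => Ψ f / ‖f‖) (Bornology.cobounded (Fin n → ℝ)) atTop ∧
  (∀ f, Ψ (-f) = Ψ f) ∧ Ψ 0 = 0

noncomputable def legendre {n : ℕ} (Ψ : (Fin n → ℝ) → ℝ) (j : Fin n → ℝ) : ℝ :=
  ⨆ f : Fin n → ℝ, (j ⬝ᵥ f - Ψ f)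

noncomputable def breg {n : ℕ} (F : (Fin n → ℝ) → ℝ) (x x' : Fin n → ℝ) : ℝ :=
  F x - F x' - (x - x') ⬝ᵥ grad F x'

def posOrth (n : ℕ) : Set (Fin n → ℝ) := {x | ∀ i, 0 < x i}

def IsThermo {n : ℕ} (Φ : (Fin n → ℝ) → ℝ) : Prop :=
  StrictConvexOn ℝ (posOrth n) Φ ∧
  (∀ x ∈ posOrth n, DifferentiableAt ℝ Φ x) ∧
  Set.BijOn (grad Φ) (posOrth n) Set.univ ∧
  (∀ xin ∈ posOrth n, ∀ xbd ∈ frontier {x : Fin n → ℝ | ∀ i, 0 ≤ x i},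
    Tendsto (fun lam : ℝ => deriv (fun l : ℝ => Φ (l • xin + (1 - l) • xbd)) lam)
      (nhdsWithin 0 (Set.Ioi 0)) atBot)

/-- The minimizer of the dual dissipation function over an iso-force class
{f : Vᵀf = Vᵀf₀} = {f : f − f₀ ∈ Im Sᵀ} exists, is unique, and is a steady (divergence-free)
force: S ∇Ψ*(f◊) = 0. -/
theorem iso_force_minimizer_is_steady_force {V E Z : ℕ}
    (S : Matrix (Fin V) (Fin E) ℝ)
    (Ψstar : (Fin E → ℝ) → ℝ) (h : IsDissipation Ψstar)
    (Vm : Matrix (Fin E) (Fin Z) ℝ)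
    (hVker : ∀ w : Fin Z → ℝ, S *ᵥ (Vm *ᵥ w) = 0)
    (hVspan : ∀ j : Fin E → ℝ, S *ᵥ j = 0 → ∃ w, Vm *ᵥ w = j)
    (hVinj : Function.Injective Vm.mulVec)
    (f₀ : Fin E → ℝ) :
    ({f : Fin E → ℝ | Vmᵀ *ᵥ f = Vmᵀ *ᵥ f₀} =
      {f : Fin E → ℝ | ∃ u, f - f₀ = Sᵀ *ᵥ u}) ∧
    ∃ fd : Fin E → ℝ,
      (Vmᵀ *ᵥ fd = Vmᵀ *ᵥ f₀ ∧
        ∀ f : Fin E → ℝ, Vmᵀ *ᵥ f = Vmᵀ *ᵥ f₀ → Ψstar fd ≤ Ψstar f) ∧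
      (∀ f : Fin E → ℝ,
        (Vmᵀ *ᵥ f = Vmᵀ *ᵥ f₀ ∧
          ∀ f' : Fin E → ℝ, Vmᵀ *ᵥ f' = Vmᵀ *ᵥ f₀ → Ψstar f ≤ Ψstar f') → f = fd) ∧
      S *ᵥ grad Ψstar fd = 0 := by
  obtain ⟨hconv, hdiff, hcoer, hsymm, hzero⟩ := h
  -- S * Vm = 0
  have hSV : S * Vm = 0 := by
    ext i k
    have := congrFun (hVker (Pi.single k 1)) i
    rw [Matrix.mulVec_mulVec] at this
    simpa [Matrix.mulVec_single, Matrix.col_apply] using this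
  have hVtSt : ∀ u : Fin V → ℝ, Vmᵀ *ᵥ (Sᵀ *ᵥ u) = 0 := by
    intro u
    rw [Matrix.mulVec_mulVec, ← Matrix.transpose_mul, hSV]
    simp
  -- submodule equality: range Sᵀ = ker Vmᵀ
  have hRV_KS : LinearMap.range (Matrix.mulVecLin Vm) = LinearMap.ker (Matrix.mulVecLin S) := by
    ext j
    simp only [LinearMap.mem_range, LinearMap.mem_ker, Matrix.mulVecLin_apply]
    constructor
    · rintro ⟨w, rfl⟩; exact hVker w
    · exact hVspan j
  have hkey : LinearMap.range (Matrix.mulVecLin Sᵀ) = LinearMap.ker (Matrix.mulVecLin Vmᵀ) := by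
    apply Submodule.eq_of_le_of_finrank_eq
    · rintro x ⟨u, rfl⟩
      exact LinearMap.mem_ker.mpr (hVtSt u)
    · have h1 := LinearMap.finrank_range_add_finrank_ker (Matrix.mulVecLin S)
      have h2 := LinearMap.finrank_range_add_finrank_ker (Matrix.mulVecLin Vmᵀ)
      have hrt : Module.finrank ℝ (LinearMap.range (Matrix.mulVecLin Sᵀ)) =
          Module.finrank ℝ (LinearMap.range (Matrix.mulVecLin S)) := Matrix.rank_transpose S
      have hvt : Module.finrank ℝ (LinearMap.range (Matrix.mulVecLin Vmᵀ)) =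
          Module.finrank ℝ (LinearMap.range (Matrix.mulVecLin Vm)) := Matrix.rank_transpose Vm
      rw [hRV_KS] at hvt
      omega
  -- the affine set
  set L := Matrix.mulVecLin Vmᵀ with hL
  have hLapp : ∀ f, L f = Vmᵀ *ᵥ f := fun f => rfl
  have hset : {f : Fin E → ℝ | Vmᵀ *ᵥ f = Vmᵀ *ᵥ f₀} =
      {f : Fin E → ℝ | ∃ u, f - f₀ = Sᵀ *ᵥ u} := by
    ext f
    simp only [Set.mem_setOf_eq]
    constructor
    · intro hf
      have hmem : f - f₀ ∈ LinearMap.ker (Matrix.mulVecLin Vmᵀ) := by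
        simp only [LinearMap.mem_ker, Matrix.mulVecLin_apply, Matrix.mulVec_sub, hf, sub_self]
      rw [← hkey] at hmem
      obtain ⟨u, hu⟩ := hmem
      exact ⟨u, hu.symm⟩
    · rintro ⟨u, hu⟩
      have hf : f = f₀ + Sᵀ *ᵥ u := by
        rw [← hu]; abel
      rw [hf, Matrix.mulVec_add, hVtSt, add_zero]
  refine ⟨hset, ?_⟩
  set A : Set (Fin E → ℝ) := {f | Vmᵀ *ᵥ f = Vmᵀ *ᵥ f₀} with hA
  have hAmem : ∀ f, f ∈ A ↔ Vmᵀ *ᵥ f = Vmᵀ *ᵥ f₀ := fun f => Iff.rfl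
  have hf₀A : f₀ ∈ A := rfl
  have hAclosed : IsClosed A := by
    have : A = L ⁻¹' {Vmᵀ *ᵥ f₀} := by
      ext f; simp [hAmem, hLapp]
    rw [this]
    exact IsClosed.preimage L.continuous_of_finiteDimensional isClosed_singleton
  have hΨcont : Continuous Ψstar := hdiff.continuous
  -- coercivity bound
  have hev : ∀ᶠ f in Bornology.cobounded (Fin E → ℝ), Ψstar f₀ ≤ Ψstar f := by
    have h1 := hcoer.eventually (eventually_ge_atTop (|Ψstar f₀| + 1))
    filter_upwards [h1, eventually_cobounded_le_norm (1 : ℝ)] with f hf1 hf2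
    have hfpos : (0:ℝ) < ‖f‖ := lt_of_lt_of_le one_pos hf2
    have hC : (0:ℝ) ≤ |Ψstar f₀| + 1 := by positivity
    have : (|Ψstar f₀| + 1) * ‖f‖ ≤ Ψstar f := (le_div_iff₀ hfpos).mp hf1
    nlinarith [abs_nonneg (Ψstar f₀), le_abs_self (Ψstar f₀)]
  have hcc : cocompact (Fin E → ℝ) ⊓ 𝓟 A ≤ Bornology.cobounded (Fin E → ℝ) := by
    rw [Metric.cobounded_eq_cocompact]; exact inf_le_left
  obtain ⟨fd, hfdA, hfdmin⟩ :=
    ContinuousOn.exists_isMinOn' (hΨcont.continuousOn) hAclosed hf₀A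
      ((hev.filter_mono hcc).mono fun f hf => hf)
  have hmin : ∀ f ∈ A, Ψstar fd ≤ Ψstar f := fun f hf => hfdmin hf
  refine ⟨fd, ⟨hfdA, fun f hf => hmin f hf⟩, ?_, ?_⟩
  · -- uniqueness
    rintro f ⟨hfA, hfmin⟩
    by_contra hne
    have heq : Ψstar f = Ψstar fd := le_antisymm (hfmin fd hfdA) (hmin f hfA)
    have hmid : (1/2 : ℝ) • f + (1/2 : ℝ) • fd ∈ A := by
      show Vmᵀ *ᵥ ((1/2 : ℝ) • f + (1/2 : ℝ) • fd) = Vmᵀ *ᵥ f₀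
      have : Vmᵀ *ᵥ ((1/2 : ℝ) • f + (1/2 : ℝ) • fd)
          = (1/2 : ℝ) • (Vmᵀ *ᵥ f) + (1/2 : ℝ) • (Vmᵀ *ᵥ fd) := by
        rw [Matrix.mulVec_add, Matrix.mulVec_smul, Matrix.mulVec_smul]
      rw [this, hfA, hfdA, ← add_smul]
      norm_num
    have hstrict := hconv.2 (Set.mem_univ f) (Set.mem_univ fd) hne
      (by norm_num : (0:ℝ) < 1/2) (by norm_num : (0:ℝ) < 1/2) (by norm_num)
    rw [heq] at hstrict
    have : Ψstar fd ≤ Ψstar ((1/2 : ℝ) • f + (1/2 : ℝ) • fd) := hmin _ hmid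
    simp only [smul_eq_mul] at hstrict
    linarith
  · -- steady force
    have hfdiff : DifferentiableAt ℝ Ψstar fd := (hdiff.differentiable one_ne_zero) fd
    have hderiv0 : ∀ d : Fin E → ℝ, Vmᵀ *ᵥ d = 0 → fderiv ℝ Ψstar fd d = 0 := by
      intro d hd
      have hcurve : ∀ t : ℝ, fd + t • d ∈ A := by
        intro t
        show Vmᵀ *ᵥ (fd + t • d) = Vmᵀ *ᵥ f₀
        rw [Matrix.mulVec_add, Matrix.mulVec_smul, hd, smul_zero, add_zero, hfdA]
      have hc : HasDerivAt (fun t : ℝ => fd + t • d) d 0 := by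
        have := ((hasDerivAt_id (0:ℝ)).smul_const d).const_add fd
        simpa using this
      have hF : HasFDerivAt Ψstar (fderiv ℝ Ψstar fd) (fd + (0:ℝ) • d) := by
        simpa using hfdiff.hasFDerivAt
      have hg : HasDerivAt (fun t : ℝ => Ψstar (fd + t • d)) (fderiv ℝ Ψstar fd d) 0 := by
        have := hF.comp_hasDerivAt 0 hc
        exact this
      have hlm : IsLocalMin (fun t : ℝ => Ψstar (fd + t • d)) 0 := by
        apply Filter.Eventually.of_forall
        intro t
        have h0 : Ψstar (fd + (0:ℝ) • d) = Ψstar fd := by simp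
        simpa [h0] using hmin _ (hcurve t)
      exact hlm.hasDerivAt_eq_zero hg
    funext i
    have hrow : Vmᵀ *ᵥ (fun e => S i e) = 0 := by
      have := hVtSt (Pi.single i 1)
      simp [Matrix.mulVec_single] at this
      exact this
    have hrep : (fun e => S i e) = ∑ e : Fin E, (S i e) • (Pi.single e 1 : Fin E → ℝ) := by
      funext j
      simp [Finset.sum_apply, Pi.single_apply, mul_ite, Finset.sum_ite_eq']
    have := hderiv0 _ hrow
    rw [hrep] at this
    rw [map_sum] at this
    simp only [_root_.map_smul, smul_eq_mul] at this
    show (S *ᵥ grad Ψstar fd) i = (0 : Fin V → ℝ) i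
    simpa [Matrix.mulVec, dotProduct, grad] using this
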